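/- Every Noetherian (t−1)-invertible t-unipotent Λ-module is finitely generated as an abelian group (i.e., as a ℤ-module). -/

import Mathlib

open Polynomial

/-- `Λ` is the ring `ℤ[t,t⁻¹]` of Laurent polynomials with integer coefficients. -/
abbrev Λ : Type := LaurentPolynomial ℤ

/-- `tL` is the element `t` of `Λ = ℤ[t,t⁻¹]`. -/
noncomputable def tL : Λ := LaurentPolynomial.T 1

/-- Every Noetherian (t−1)-invertible t-unipotent Λ-module is finitely generated
as an abelian group. -/
theorem unipotent_invertible_finitely_generated_over_int (M : Type) [AddCommGroup M]
    [Module Λ M] [IsNoetherian Λ M]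
    (hM : Function.Bijective (fun v : M => (tL - 1) • v))
    (huni : ∃ n : ℕ, 1 ≤ n ∧ ∀ v : M, (tL ^ n) • v = v) :
    Module.Finite ℤ M := by
  classical
  obtain ⟨n, hn1, hnv⟩ := huni
  obtain ⟨s, hs⟩ := IsNoetherian.noetherian (⊤ : Submodule Λ M)
  -- tL ^ j = T j
  have hT : ∀ j : ℕ, (LaurentPolynomial.T (j : ℤ) : Λ) = tL ^ j := by
    intro j
    rw [tL, LaurentPolynomial.T_pow, mul_one]
  -- powers of t^n act trivially
  have hpow : ∀ (j : ℕ) (x : M), (tL ^ (n * j)) • x = x := by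
    intro j x
    induction j with
    | zero => simp
    | succ j ih => rw [Nat.mul_succ, pow_add, mul_smul, hnv, ih]
  have hTmulk : ∀ (k : ℤ) (x : M), ((LaurentPolynomial.T ((n : ℤ) * k) : Λ)) • x = x := by
    intro k x
    rcases le_or_gt 0 k with hk | hk
    · lift k to ℕ using hk
      rw [← Nat.cast_mul, hT, hpow]
    · have hk' : (0:ℤ) ≤ -k := by omega
      have h1 : ((LaurentPolynomial.T ((n : ℤ) * (-k)) : Λ)) • x = x := by
        lift (-k) to ℕ using hk' with m hm
        rw [← Nat.cast_mul, hT, hpow]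
      calc ((LaurentPolynomial.T ((n : ℤ) * k) : Λ)) • x
          = ((LaurentPolynomial.T ((n : ℤ) * k) : Λ)) • (((LaurentPolynomial.T ((n : ℤ) * (-k)) : Λ)) • x) := by
            rw [h1]
        _ = (((LaurentPolynomial.T ((n : ℤ) * k) : Λ)) * ((LaurentPolynomial.T ((n : ℤ) * (-k)) : Λ))) • x := by
            rw [mul_smul]
        _ = x := by
            rw [← LaurentPolynomial.T_add]
            have : (n : ℤ) * k + (n : ℤ) * (-k) = 0 := by ring
            rw [this, LaurentPolynomial.T_zero, one_smul]
  -- reduction mod n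
  have hTmod : ∀ (m : ℤ) (x : M),
      ((LaurentPolynomial.T m : Λ)) • x = (tL ^ (m % (n : ℤ)).toNat) • x := by
    intro m x
    have hdm : m = (n : ℤ) * (m / (n : ℤ)) + m % (n : ℤ) := (Int.mul_ediv_add_emod m n).symm
    have hr0 : (0:ℤ) ≤ m % (n : ℤ) := Int.emod_nonneg m (by exact_mod_cast Nat.pos_of_ne_zero (by omega) |>.ne')
    calc ((LaurentPolynomial.T m : Λ)) • x
        = ((LaurentPolynomial.T ((n : ℤ) * (m / (n : ℤ)) + m % (n : ℤ)) : Λ)) • x := by rw [← hdm]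
      _ = (((LaurentPolynomial.T ((n : ℤ) * (m / (n : ℤ))) : Λ)) * (LaurentPolynomial.T (m % (n : ℤ)) : Λ)) • x := by
          rw [LaurentPolynomial.T_add]
      _ = ((LaurentPolynomial.T ((n : ℤ) * (m / (n : ℤ))) : Λ)) • (((LaurentPolynomial.T (m % (n : ℤ)) : Λ)) • x) := by
          rw [mul_smul]
      _ = ((LaurentPolynomial.T (m % (n : ℤ)) : Λ)) • x := hTmulk _ _
      _ = (tL ^ (m % (n : ℤ)).toNat) • x := by
          rw [← hT, Int.toNat_of_nonneg hr0]
  -- the finite generating set over ℤ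
  set Tset : Set M := (fun p : ℕ × M => (tL ^ p.1) • p.2) '' ((Set.Iio n) ×ˢ (s : Set M)) with hTset
  have hTfin : Tset.Finite := (Set.finite_Iio n |>.prod s.finite_toSet).image _
  -- span ℤ Tset is closed under T m action
  have hclosed : ∀ (m : ℤ) (v : M), v ∈ Submodule.span ℤ Tset →
      ((LaurentPolynomial.T m : Λ)) • v ∈ Submodule.span ℤ Tset := by
    intro m v hv
    induction hv using Submodule.span_induction with
    | mem y hy =>
      obtain ⟨⟨k, x⟩, ⟨hk, hx⟩, rfl⟩ := hy
      have : ((LaurentPolynomial.T m : Λ)) • (tL ^ k) • x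
          = ((LaurentPolynomial.T (m + (k : ℤ)) : Λ)) • x := by
        rw [LaurentPolynomial.T_add, mul_smul, hT]
      rw [this, hTmod]
      refine Submodule.subset_span ?_
      refine ⟨(((m + (k:ℤ)) % (n:ℤ)).toNat, x), ⟨?_, hx⟩, rfl⟩
      have : ((m + (k:ℤ)) % (n:ℤ)) < n := Int.emod_lt_of_pos _ (by exact_mod_cast by omega)
      simp only [Set.mem_Iio]
      omega
    | zero => simp
    | add y z _ _ hy hz => rw [smul_add]; exact Submodule.add_mem _ hy hz
    | smul a y _ hy =>
      rw [smul_comm]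
      exact Submodule.smul_mem _ a hy
  -- the ℤ-span is a Λ-submodule
  let P : Submodule Λ M :=
    { carrier := (Submodule.span ℤ Tset : Set M)
      add_mem' := fun ha hb => Submodule.add_mem _ ha hb
      zero_mem' := Submodule.zero_mem _
      smul_mem' := by
        intro p v hv
        induction p using LaurentPolynomial.induction_on' with
        | add p q hp hq => rw [add_smul]; exact Submodule.add_mem _ hp hq
        | C_mul_T m a =>
          rw [mul_smul]
          have h1 : (LaurentPolynomial.T m : Λ) • v ∈ Submodule.span ℤ Tset := hclosed m v hv
          have h2 : (LaurentPolynomial.C a : Λ) • ((LaurentPolynomial.T m : Λ) • v)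
              = a • ((LaurentPolynomial.T m : Λ) • v) := by
            rw [LaurentPolynomial.C_eq_algebraMap, algebraMap_smul]
          rw [h2]
          exact Submodule.smul_mem _ a h1 }
  have hsP : (s : Set M) ⊆ P := by
    intro x hx
    show x ∈ Submodule.span ℤ Tset
    refine Submodule.subset_span ⟨(0, x), ⟨?_, hx⟩, by simp⟩
    simpa using by omega
  have hPtop : P = ⊤ := by
    rw [eq_top_iff, ← hs]
    exact Submodule.span_le.mpr hsP
  have hspan : Submodule.span ℤ Tset = ⊤ := by
    rw [eq_top_iff]
    intro v _
    have : v ∈ P := hPtop ▸ Submodule.mem_top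
    exact this
  exact ⟨⟨hTfin.toFinset, by rw [Set.Finite.coe_toFinset]; exact hspan⟩⟩
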